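/- Let I ≥ 2, J ≥ 1, γ < 1 with γ ≠ 0, let (θ_1,…,θ_I) and (π_{1,j},…,π_{I,j}) for j = 1,…,J be probability vectors with strictly positive entries, let ŵ_1,…,ŵ_J > 0 and Ŵ₀ > 0, and set s_i = Σ_{j=1}^J π_{i,j}^{1/(1−γ)}·ŵ_j and S = Σ_{j=1}^J ŵ_j. Suppose the belief-matching condition ( s_i / S )^{1−γ} = θ_i holds for every i. Then ξ = Ŵ₀^{1−γ} solves the equation Σ_{i=1}^I θ_i·( Ŵ₀ + ( −Ŵ₀·s_i + (ξ·θ_i)^{1/(1−γ)}·S ) / ( (ξ·θ_i)^{1/(1−γ)} + s_i ) )^γ = Ŵ₀^γ, and consequently the quantities h_i(ξ) = ( ( (ξ θ_i)^{1/(1−γ)} + s_i ) / ( Ŵ₀ + S ) )^{1−γ}, normalized, give the approximate limiting price p*_i = ( Ŵ₀·θ_i^{1/(1−γ)} + Σ_{j=1}^J ŵ_j·π_{i,j}^{1/(1−γ)} )^{1−γ} / Σ_{k=1}^I ( Ŵ₀·θ_k^{1/(1−γ)} + Σ_{j=1}^J ŵ_j·π_{k,j}^{1/(1−γ)} )^{1−γ}.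 -/

import Mathlib

/-- Verification of the approximate limiting price formula for HARA
markets: under the belief-matching condition, `ξ = Ŵ₀^{1-γ}` solves the binding
constraint equation, and the normalized quantities `hᵢ(ξ)` give the weighted power
mean price formula. -/
theorem stmt_18 (I J : ℕ) (hI : 2 ≤ I) (hJ : 1 ≤ J)
    (γ : ℝ) (hγ1 : γ < 1) (hγ0 : γ ≠ 0)
    (θ : Fin I → ℝ) (hθ : ∀ i, 0 < θ i) (hθs : ∑ i, θ i = 1)
    (π : Fin J → Fin I → ℝ) (hπ : ∀ j i, 0 < π j i) (hπs : ∀ j, ∑ i, π j i = 1)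
    (w : Fin J → ℝ) (hw : ∀ j, 0 < w j) (W0 : ℝ) (hW0 : 0 < W0)
    -- the belief-matching condition
    (hmatch : ∀ i,
      ((∑ j, π j i ^ (1 / (1 - γ)) * w j) / ∑ j, w j) ^ (1 - γ) = θ i) :
    let ξ : ℝ := W0 ^ (1 - γ)
    let s : Fin I → ℝ := fun i => ∑ j, π j i ^ (1 / (1 - γ)) * w j
    let Ssum : ℝ := ∑ j, w j
    -- `ξ = Ŵ₀^{1-γ}` solves the binding-constraint equation
    (∑ i, θ i * (W0 + (-(W0 * s i) + (ξ * θ i) ^ (1 / (1 - γ)) * Ssum) /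
        ((ξ * θ i) ^ (1 / (1 - γ)) + s i)) ^ γ = W0 ^ γ) ∧
    -- the normalized `hᵢ(ξ)` give the approximate limiting price
    (∀ i, (((ξ * θ i) ^ (1 / (1 - γ)) + s i) / (W0 + Ssum)) ^ (1 - γ) /
        (∑ k, (((ξ * θ k) ^ (1 / (1 - γ)) + s k) / (W0 + Ssum)) ^ (1 - γ)) =
      (W0 * θ i ^ (1 / (1 - γ)) + ∑ j, w j * π j i ^ (1 / (1 - γ))) ^ (1 - γ) /
        ∑ k, (W0 * θ k ^ (1 / (1 - γ)) + ∑ j, w j * π j k ^ (1 / (1 - γ))) ^ (1 - γ)) := by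
  intro ξ s Ssum
  have he : (0:ℝ) < 1 - γ := by linarith
  have hne : (1 - γ) ≠ 0 := ne_of_gt he
  haveI : Nonempty (Fin J) := Fin.pos_iff_nonempty.mp (by omega)
  have hS : 0 < Ssum := Finset.sum_pos (fun j _ => hw j) Finset.univ_nonempty
  have hs : ∀ i, 0 < s i := fun i =>
    Finset.sum_pos (fun j _ => mul_pos (Real.rpow_pos_of_pos (hπ j i) _) (hw j))
      Finset.univ_nonempty
  have hθeq : ∀ i, θ i = (s i / Ssum) ^ (1 - γ) := fun i => (hmatch i).symm
  have hpow : ∀ i, (θ i) ^ (1 / (1 - γ)) = s i / Ssum := by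
    intro i
    rw [hθeq i, one_div, Real.rpow_rpow_inv (div_pos (hs i) hS).le hne]
  have key : ∀ i, (ξ * θ i) ^ (1 / (1 - γ)) = W0 * (s i / Ssum) := by
    intro i
    have : ξ * θ i = (W0 * (s i / Ssum)) ^ (1 - γ) := by
      rw [hθeq i, Real.mul_rpow hW0.le (div_pos (hs i) hS).le]
    rw [this, one_div, Real.rpow_rpow_inv (mul_nonneg hW0.le (div_pos (hs i) hS).le) hne]
  constructor
  · have hterm : ∀ i ∈ Finset.univ, θ i * (W0 + (-(W0 * s i) + (ξ * θ i) ^ (1 / (1 - γ)) * Ssum) /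
        ((ξ * θ i) ^ (1 / (1 - γ)) + s i)) ^ γ = θ i * W0 ^ γ := by
      intro i _
      rw [key i]
      have h1 : -(W0 * s i) + W0 * (s i / Ssum) * Ssum = 0 := by
        field_simp
        ring
      rw [h1, zero_div, add_zero]
    rw [Finset.sum_congr rfl hterm, ← Finset.sum_mul, hθs, one_mul]
  · intro i
    have hx : ∀ k, ((ξ * θ k) ^ (1 / (1 - γ)) + s k) / (W0 + Ssum) = s k / Ssum := by
      intro k
      rw [key k]
      field_simp
    have hy : ∀ k, W0 * θ k ^ (1 / (1 - γ)) + ∑ j, w j * π j k ^ (1 / (1 - γ))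
        = (s k / Ssum) * (W0 + Ssum) := by
      intro k
      have : ∑ j, w j * π j k ^ (1 / (1 - γ)) = s k := by
        simp only [s, mul_comm]
      rw [hpow k, this]
      field_simp
    have hC : (0:ℝ) < (W0 + Ssum) ^ (1 - γ) := Real.rpow_pos_of_pos (by linarith) _
    simp only [hx, hy]
    have hz : ∀ k, (s k / Ssum * (W0 + Ssum)) ^ (1 - γ)
        = (s k / Ssum) ^ (1 - γ) * (W0 + Ssum) ^ (1 - γ) := fun k =>
      Real.mul_rpow (div_pos (hs k) hS).le (by linarith : (0:ℝ) ≤ W0 + Ssum)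
    simp only [hz]
    rw [← Finset.sum_mul, mul_div_mul_right _ _ hC.ne']
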